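/- Suppose rank(Σ_{l=1}^L B_l²) = K and λ_K(Σ_{l=1}^L B_l²) ≥ c₂ L for some constant c₂ > 0. Let V, Ŝ, V̂ and the orthogonal matrix Q_s be as follows: V ∈ R^{n×K} has orthonormal columns that are eigenvectors of S̃_sum corresponding to its K nonzero eigenvalues, Ŝ ∈ R^{n×n} is symmetric, V̂ ∈ R^{n×K} has orthonormal columns that are eigenvectors of Ŝ for its K largest-magnitude eigenvalues, every row of V̂ is nonzero, and Q_s is a K×K orthogonal matrix achieving ‖V̂Q_s − V‖_F ≤ 2√(2K)‖Ŝ − S̃_sum‖/(c₂θ_min⁴n_min²L). Let V_* and V̂_* be obtained from V and V̂ by normalizing each row to unit Euclidean norm. Then ‖V̂_*Q_s − V_*‖_F ≤ 4√(2K)·θ_max√(n_max)·‖Ŝ − S̃_sum‖ / (c₂ θ_min⁵ n_min² L). -/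

import Mathlib

open Matrix MeasureTheory ProbabilityTheory
open scoped BigOperators ENNReal

noncomputable section

/-- Euclidean norm of a finite real vector. -/
def vecNorm {m : ℕ} (v : Fin m → ℝ) : ℝ := Real.sqrt (∑ i, v i ^ 2)

/-- Frobenius norm of a real matrix. -/
def frobNorm {m p : ℕ} (M : Matrix (Fin m) (Fin p) ℝ) : ℝ :=
  Real.sqrt (∑ i, ∑ j, M i j ^ 2)

/-- Spectral norm (ℓ² operator norm) of a real matrix. -/
def specNorm {m p : ℕ} (M : Matrix (Fin m) (Fin p) ℝ) : ℝ :=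
  sSup ((fun x => vecNorm (M.mulVec x)) '' {x : Fin p → ℝ | vecNorm x ≤ 1})

open Classical in
/-- The k-th largest (1-indexed) eigenvalue in magnitude of a real symmetric matrix
(`0` if the matrix is not Hermitian). -/
def kthAbsEig {m : ℕ} (M : Matrix (Fin m) (Fin m) ℝ) (k : ℕ) : ℝ :=
  if hM : M.IsHermitian then
    (((Finset.univ : Finset (Fin m)).val.map fun i => |hM.eigenvalues i|).sort (· ≤ ·)).getD
      (m - k) 0
  else 0

/-- `Z` is a community membership matrix: 0/1 entries, exactly one 1 per row,
every column nonzero. -/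
def IsMembership {n K : ℕ} (Z : Matrix (Fin n) (Fin K) ℝ) : Prop :=
  (∀ i k, Z i k = 0 ∨ Z i k = 1) ∧ (∀ i, ∑ k, Z i k = 1) ∧ (∀ k, ∃ i, Z i k = 1)

/-- The MLDCSBM model hypotheses on the parameters `Z`, `θ`, `B`. -/
def MLDCSBM {n L K : ℕ} (Z : Matrix (Fin n) (Fin K) ℝ) (θ : Fin n → ℝ)
    (B : Fin L → Matrix (Fin K) (Fin K) ℝ) : Prop :=
  IsMembership Z ∧ (∀ i, 0 < θ i ∧ θ i ≤ 1) ∧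
    (∀ l, (B l).IsSymm ∧ ∀ a b, 0 ≤ B l a b ∧ B l a b ≤ 1)

/-- Ω_l = Θ Z B_l Zᵀ Θ. -/
def OmegaL {n K : ℕ} (θ : Fin n → ℝ) (Z : Matrix (Fin n) (Fin K) ℝ)
    (Bl : Matrix (Fin K) (Fin K) ℝ) : Matrix (Fin n) (Fin n) ℝ :=
  Matrix.diagonal θ * Z * Bl * Zᵀ * Matrix.diagonal θ

def thetaMin {n : ℕ} (θ : Fin n → ℝ) : ℝ := sInf (Set.range θ)
def thetaMax {n : ℕ} (θ : Fin n → ℝ) : ℝ := sSup (Set.range θ)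

/-- Minimum community size. -/
def nMin {n K : ℕ} (Z : Matrix (Fin n) (Fin K) ℝ) : ℝ :=
  sInf (Set.range fun k : Fin K => ∑ i, Z i k)

/-- Maximum community size. -/
def nMax {n K : ℕ} (Z : Matrix (Fin n) (Fin K) ℝ) : ℝ :=
  sSup (Set.range fun k : Fin K => ∑ i, Z i k)

/-- Column `k` of a matrix, as a vector. -/
def colVec {n K : ℕ} (U : Matrix (Fin n) (Fin K) ℝ) (k : Fin K) : Fin n → ℝ := fun i => U i k

/-- Row-normalized version of a matrix: each row divided by its Euclidean norm. -/
def rowNormalize {n K : ℕ} (U : Matrix (Fin n) (Fin K) ℝ) : Matrix (Fin n) (Fin K) ℝ :=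
  fun i k => U i k / vecNorm (fun j => U i j)

/-- Diagonal degree matrix of a square matrix. -/
def degDiag {n : ℕ} (M : Matrix (Fin n) (Fin n) ℝ) : Matrix (Fin n) (Fin n) ℝ :=
  Matrix.diagonal fun i => ∑ j, M i j

lemma vecNorm_eq_norm {m : ℕ} (v : Fin m → ℝ) :
    vecNorm v = ‖(WithLp.equiv 2 (Fin m → ℝ)).symm v‖ := by
  rw [EuclideanSpace.norm_eq]
  simp [vecNorm, Real.norm_eq_abs, sq_abs]

lemma vecNorm_nonneg {m : ℕ} (v : Fin m → ℝ) : 0 ≤ vecNorm v := Real.sqrt_nonneg _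

lemma vecNorm_pos {m : ℕ} {v : Fin m → ℝ} (hv : v ≠ 0) : 0 < vecNorm v := by
  rw [vecNorm_eq_norm]
  simp only [norm_pos_iff]
  exact fun h => hv (by simpa using congrArg (WithLp.equiv 2 (Fin m → ℝ)) h)

/-- Key normalization-perturbation inequality in a normed space. -/
lemma normalize_sub_le {E : Type*} [NormedAddCommGroup E] [NormedSpace ℝ E]
    {u v : E} (hu : u ≠ 0) (hv : v ≠ 0) :
    ‖‖u‖⁻¹ • u - ‖v‖⁻¹ • v‖ ≤ 2 * ‖u - v‖ / ‖v‖ := by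
  have hu' : (0:ℝ) < ‖u‖ := norm_pos_iff.2 hu
  have hv' : (0:ℝ) < ‖v‖ := norm_pos_iff.2 hv
  have key : ‖u‖⁻¹ • u - ‖v‖⁻¹ • v = ‖v‖⁻¹ • (u - v) + (‖u‖⁻¹ - ‖v‖⁻¹) • u := by
    rw [sub_smul, smul_sub]; abel
  rw [key]
  calc ‖‖v‖⁻¹ • (u - v) + (‖u‖⁻¹ - ‖v‖⁻¹) • u‖
      ≤ ‖‖v‖⁻¹ • (u - v)‖ + ‖(‖u‖⁻¹ - ‖v‖⁻¹) • u‖ := norm_add_le _ _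
    _ = ‖v‖⁻¹ * ‖u - v‖ + |‖u‖⁻¹ - ‖v‖⁻¹| * ‖u‖ := by
        rw [norm_smul, norm_smul, Real.norm_eq_abs, Real.norm_eq_abs,
          abs_of_pos (inv_pos.2 hv')]
    _ ≤ ‖v‖⁻¹ * ‖u - v‖ + ‖v‖⁻¹ * ‖u - v‖ := by
        gcongr _ + ?_
        have h1 : |‖u‖⁻¹ - ‖v‖⁻¹| = |‖v‖ - ‖u‖| / (‖u‖ * ‖v‖) := by
          rw [inv_sub_inv hu'.ne' hv'.ne', abs_div, abs_sub_comm,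
            abs_of_pos (show (0:ℝ) < ‖u‖ * ‖v‖ by positivity)]
        have h2 : |‖v‖ - ‖u‖| ≤ ‖u - v‖ := by
          rw [abs_sub_comm]; exact abs_norm_sub_norm_le u v
        calc |‖u‖⁻¹ - ‖v‖⁻¹| * ‖u‖ = |‖v‖ - ‖u‖| / ‖v‖ := by
              rw [h1]; field_simp
          _ ≤ ‖u - v‖ / ‖v‖ := by gcongr
          _ = ‖v‖⁻¹ * ‖u - v‖ := by rw [div_eq_inv_mul]
    _ = 2 * ‖u - v‖ / ‖v‖ := by ring

lemma sum_omega_sq_factor {n L K : ℕ} (θ : Fin n → ℝ) (Z : Matrix (Fin n) (Fin K) ℝ)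
    (B : Fin L → Matrix (Fin K) (Fin K) ℝ) :
    ∑ l, (OmegaL θ Z (B l)) ^ 2 =
      (Matrix.diagonal θ * Z) *
        ∑ l, (B l * (Zᵀ * (Matrix.diagonal θ * Matrix.diagonal θ) * Z) * B l * Zᵀ *
          Matrix.diagonal θ) := by
  rw [Matrix.mul_sum]
  refine Finset.sum_congr rfl fun l _ => ?_
  simp only [OmegaL, pow_two]
  simp only [Matrix.mul_assoc]

theorem stmt7 {n L K : ℕ} (hn : 0 < n) (hL : 0 < L) (hK : 0 < K) (hKn : K ≤ n)
    (Z : Matrix (Fin n) (Fin K) ℝ) (θ : Fin n → ℝ)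
    (B : Fin L → Matrix (Fin K) (Fin K) ℝ)
    (hmodel : MLDCSBM Z θ B)
    (c₂ : ℝ) (hc₂ : 0 < c₂)
    (hrank : (∑ l, (B l) ^ 2).rank = K)
    (hgap : c₂ * L ≤ kthAbsEig (∑ l, (B l) ^ 2) K)
    (V : Matrix (Fin n) (Fin K) ℝ)
    (hVorth : Vᵀ * V = 1)
    (hVeig : ∀ k, ∃ μ : ℝ, μ ≠ 0 ∧
      (∑ l, (OmegaL θ Z (B l)) ^ 2).mulVec (colVec V k) = μ • colVec V k)
    (Shat : Matrix (Fin n) (Fin n) ℝ) (hShat : Shat.IsSymm)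
    (Vhat : Matrix (Fin n) (Fin K) ℝ)
    (hVhatOrth : Vhatᵀ * Vhat = 1)
    (hVhatEig : ∀ k, ∃ μ : ℝ,
      Shat.mulVec (colVec Vhat k) = μ • colVec Vhat k ∧ kthAbsEig Shat K ≤ |μ|)
    (hVhatRows : ∀ i, Vhat i ≠ 0)
    (Qs : Matrix (Fin K) (Fin K) ℝ) (hQs : Qsᵀ * Qs = 1)
    (hQsbound : frobNorm (Vhat * Qs - V) ≤
      2 * Real.sqrt (2 * K) * specNorm (Shat - ∑ l, (OmegaL θ Z (B l)) ^ 2) /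
        (c₂ * thetaMin θ ^ 4 * nMin Z ^ 2 * L)) :
    frobNorm (rowNormalize Vhat * Qs - rowNormalize V) ≤
      4 * Real.sqrt (2 * K) * thetaMax θ * Real.sqrt (nMax Z) *
        specNorm (Shat - ∑ l, (OmegaL θ Z (B l)) ^ 2) /
          (c₂ * thetaMin θ ^ 5 * nMin Z ^ 2 * L) := by
  classical
  obtain ⟨⟨h01, hrowsum, hcol⟩, hθ, hB⟩ := hmodel
  -- community labels
  have hmem : ∀ i, ∃ k, Z i k = 1 := by
    intro i
    obtain ⟨k, _, hk⟩ := Finset.exists_ne_zero_of_sum_ne_zero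
      (s := Finset.univ) (f := fun k => Z i k) (by rw [hrowsum i]; norm_num)
    exact ⟨k, (h01 i k).resolve_left hk⟩
  choose ℓ hℓ using hmem
  have hZ0 : ∀ i k, k ≠ ℓ i → Z i k = 0 := by
    intro i k hk
    by_contra h
    have hk1 : Z i k = 1 := (h01 i k).resolve_left h
    have h2 : (2:ℝ) ≤ ∑ j, Z i j := by
      calc (2:ℝ) = ∑ j ∈ ({k, ℓ i} : Finset (Fin K)), Z i j := by
            rw [Finset.sum_pair hk, hk1, hℓ i]; norm_num
        _ ≤ ∑ j, Z i j := Finset.sum_le_sum_of_subset_of_nonneg (Finset.subset_univ _)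
            (fun j _ _ => by rcases h01 i j with h'|h' <;> simp [h'])
    rw [hrowsum i] at h2; linarith
  have hZite : ∀ i k, Z i k = if ℓ i = k then 1 else 0 := by
    intro i k
    by_cases h : ℓ i = k
    · subst h; simp [hℓ i]
    · simp [h, hZ0 i k fun hc => h hc.symm]
  -- positivity facts
  haveI : Nonempty (Fin n) := Fin.pos_iff_nonempty.mp hn
  haveI : Nonempty (Fin K) := Fin.pos_iff_nonempty.mp hK
  have hθmin_le : ∀ i, thetaMin θ ≤ θ i := fun i =>
    csInf_le (Set.Finite.bddBelow (Set.finite_range θ)) ⟨i, rfl⟩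
  have hθle_max : ∀ i, θ i ≤ thetaMax θ := fun i =>
    le_csSup (Set.Finite.bddAbove (Set.finite_range θ)) ⟨i, rfl⟩
  have hθminpos : 0 < thetaMin θ := by
    obtain ⟨i, hi⟩ := Set.Nonempty.csInf_mem (Set.range_nonempty θ) (Set.finite_range θ)
    rw [show thetaMin θ = sInf (Set.range θ) from rfl, ← hi]
    exact (hθ i).1
  have hθmaxpos : 0 < thetaMax θ := lt_of_lt_of_le hθminpos
    (le_trans (hθmin_le (Classical.arbitrary _)) (hθle_max _))
  have hcolsum_ge1 : ∀ g, (1:ℝ) ≤ ∑ i, Z i g := by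
    intro g
    obtain ⟨i, hi⟩ := hcol g
    calc (1:ℝ) = Z i g := hi.symm
      _ ≤ ∑ i, Z i g := Finset.single_le_sum (f := fun j => Z j g)
          (fun j _ => by show (0:ℝ) ≤ Z j g; rcases h01 j g with h'|h' <;> rw [h'] <;> norm_num)
          (Finset.mem_univ i)
  have hnMin_ge1 : (1:ℝ) ≤ nMin Z := by
    obtain ⟨g, hg⟩ := Set.Nonempty.csInf_mem
      (Set.range_nonempty fun k : Fin K => ∑ i, Z i k)
      (Set.finite_range fun k : Fin K => ∑ i, Z i k)
    rw [show nMin Z = sInf _ from rfl, ← hg]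
    exact hcolsum_ge1 g
  have hcolsum_le : ∀ g, (∑ i, Z i g) ≤ nMax Z := fun g =>
    le_csSup (Set.Finite.bddAbove (Set.finite_range _)) ⟨g, rfl⟩
  have hnMaxpos : 0 < nMax Z :=
    lt_of_lt_of_le one_pos (le_trans (hcolsum_ge1 (Classical.arbitrary _)) (hcolsum_le _))
  -- factorization V = Θ Z X
  choose μ hμ0 hμeig using hVeig
  set M : Matrix (Fin K) (Fin n) ℝ :=
    ∑ l, (B l * (Zᵀ * (Matrix.diagonal θ * Matrix.diagonal θ) * Z) * B l * Zᵀ *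
      Matrix.diagonal θ) with hM
  set X : Matrix (Fin K) (Fin K) ℝ :=
    fun j k => (μ k)⁻¹ * ((M.mulVec (colVec V k)) j) with hXdef
  have hVX : ∀ i k, V i k = θ i * X (ℓ i) k := by
    intro i k
    have h1 : (∑ l, (OmegaL θ Z (B l))^2).mulVec (colVec V k) = μ k • colVec V k := hμeig k
    rw [sum_omega_sq_factor, ← Matrix.mulVec_mulVec] at h1
    have h2 : colVec V k = (μ k)⁻¹ • ((Matrix.diagonal θ * Z).mulVec (M.mulVec (colVec V k))) := by
      rw [h1, smul_smul, inv_mul_cancel₀ (hμ0 k), one_smul]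
    have h3 := congrFun h2 i
    have h4 : ((Matrix.diagonal θ * Z).mulVec (M.mulVec (colVec V k))) i
        = θ i * (M.mulVec (colVec V k)) (ℓ i) := by
      rw [← Matrix.mulVec_mulVec, Matrix.mulVec_diagonal]
      congr 1
      show ∑ j, Z i j * (M.mulVec (colVec V k)) j = _
      rw [Finset.sum_congr rfl fun j _ => by rw [hZite i j]]
      simp [Finset.sum_ite_eq]
    rw [show V i k = colVec V k i from rfl, h3, Pi.smul_apply, h4, hXdef]
    simp only [smul_eq_mul]
    ring
  -- Gram identity
  set d : Fin K → ℝ := fun g => ∑ i ∈ Finset.univ.filter (fun i => ℓ i = g), θ i ^ 2 with hd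
  have hdnn : ∀ g, 0 ≤ d g := fun g => Finset.sum_nonneg fun i _ => sq_nonneg _
  have hgram : ∀ k k', ∑ g, d g * (X g k * X g k') = if k = k' then 1 else 0 := by
    intro k k'
    have h1 := congrFun (congrFun hVorth k) k'
    rw [Matrix.mul_apply] at h1
    simp only [Matrix.transpose_apply] at h1
    calc ∑ g, d g * (X g k * X g k')
        = ∑ g, ∑ i ∈ Finset.univ.filter (fun i => ℓ i = g), θ i ^ 2 * (X (ℓ i) k * X (ℓ i) k') := by
          refine Finset.sum_congr rfl fun g _ => ?_
          rw [hd, Finset.sum_mul]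
          refine Finset.sum_congr rfl fun i hi => ?_
          rw [(Finset.mem_filter.mp hi).2]
      _ = ∑ i, θ i ^ 2 * (X (ℓ i) k * X (ℓ i) k') :=
          Finset.sum_fiberwise Finset.univ ℓ _
      _ = ∑ i, V i k * V i k' := by
          refine Finset.sum_congr rfl fun i _ => ?_
          rw [hVX i k, hVX i k']; ring
      _ = (1 : Matrix (Fin K) (Fin K) ℝ) k k' := h1
      _ = if k = k' then 1 else 0 := Matrix.one_apply
  set W : Matrix (Fin K) (Fin K) ℝ := fun g k => Real.sqrt (d g) * X g k with hWdef
  have hWtW : Wᵀ * W = 1 := by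
    ext k k'
    rw [Matrix.mul_apply]
    simp only [Matrix.transpose_apply, hWdef]
    calc ∑ g, (Real.sqrt (d g) * X g k) * (Real.sqrt (d g) * X g k')
        = ∑ g, d g * (X g k * X g k') := by
          refine Finset.sum_congr rfl fun g _ => ?_
          rw [show Real.sqrt (d g) * X g k * (Real.sqrt (d g) * X g k')
              = Real.sqrt (d g) * Real.sqrt (d g) * (X g k * X g k') by ring,
            Real.mul_self_sqrt (hdnn g)]
      _ = (1 : Matrix (Fin K) (Fin K) ℝ) k k' := by rw [hgram k k', Matrix.one_apply]
  have hWWt : W * Wᵀ = 1 := mul_eq_one_comm.mp hWtW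
  have hXrow : ∀ g, d g * ∑ k, X g k ^ 2 = 1 := by
    intro g
    have h1 := congrFun (congrFun hWWt g) g
    rw [Matrix.mul_apply] at h1
    simp only [Matrix.transpose_apply, Matrix.one_apply_eq, hWdef] at h1
    rw [Finset.mul_sum, ← h1]
    refine Finset.sum_congr rfl fun k _ => ?_
    show d g * X g k ^ 2 = Real.sqrt (d g) * X g k * (Real.sqrt (d g) * X g k)
    rw [show Real.sqrt (d g) * X g k * (Real.sqrt (d g) * X g k)
        = Real.sqrt (d g) * Real.sqrt (d g) * (X g k ^ 2) by ring,
      Real.mul_self_sqrt (hdnn g)]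
  have hdpos : ∀ g, 0 < d g := by
    intro g
    rcases lt_or_eq_of_le (hdnn g) with h | h
    · exact h
    · exfalso; have := hXrow g; rw [← h, zero_mul] at this; exact zero_ne_one this
  have hdub : ∀ g, d g ≤ thetaMax θ ^ 2 * nMax Z := by
    intro g
    have hcard : ((Finset.univ.filter (fun i => ℓ i = g)).card : ℝ) = ∑ i, Z i g := by
      rw [Finset.sum_congr rfl fun i _ => hZite i g]
      rw [Finset.sum_boole]
    calc d g ≤ ∑ _i ∈ Finset.univ.filter (fun i => ℓ i = g), thetaMax θ ^ 2 := by
          refine Finset.sum_le_sum fun i _ => ?_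
          have := hθle_max i
          have := (hθ i).1
          nlinarith
      _ = ((Finset.univ.filter (fun i => ℓ i = g)).card : ℝ) * thetaMax θ ^ 2 := by
          rw [Finset.sum_const, nsmul_eq_mul]
      _ = thetaMax θ ^ 2 * ∑ i, Z i g := by rw [hcard]; ring
      _ ≤ thetaMax θ ^ 2 * nMax Z := by
          have := hcolsum_le g; nlinarith [sq_nonneg (thetaMax θ)]
  -- lower bound on row norms of V
  set mlow : ℝ := thetaMin θ / (thetaMax θ * Real.sqrt (nMax Z)) with hmlow
  have hmlowpos : 0 < mlow := by
    rw [hmlow]; positivity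
  have hVrow_lb : ∀ i, mlow ≤ vecNorm (fun j => V i j) := by
    intro i
    have hsum : ∑ j, V i j ^ 2 = θ i ^ 2 * (d (ℓ i))⁻¹ := by
      have h1 : ∑ j, V i j ^ 2 = θ i ^ 2 * ∑ j, X (ℓ i) j ^ 2 := by
        rw [Finset.mul_sum]
        refine Finset.sum_congr rfl fun j _ => ?_
        rw [hVX i j]; ring
      rw [h1]
      congr 1
      field_simp [(hdpos (ℓ i)).ne']
      have := hXrow (ℓ i)
      linarith [hXrow (ℓ i)]
    have hv : vecNorm (fun j => V i j) = θ i / Real.sqrt (d (ℓ i)) := by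
      rw [vecNorm, hsum, Real.sqrt_mul (sq_nonneg _), Real.sqrt_sq (hθ i).1.le,
        Real.sqrt_inv, div_eq_mul_inv]
    rw [hv, hmlow]
    have hdub' : Real.sqrt (d (ℓ i)) ≤ thetaMax θ * Real.sqrt (nMax Z) := by
      calc Real.sqrt (d (ℓ i)) ≤ Real.sqrt (thetaMax θ ^ 2 * nMax Z) :=
            Real.sqrt_le_sqrt (hdub (ℓ i))
        _ = thetaMax θ * Real.sqrt (nMax Z) := by
            rw [Real.sqrt_mul (sq_nonneg _), Real.sqrt_sq hθmaxpos.le]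
    have hsqrtdpos : 0 < Real.sqrt (d (ℓ i)) := Real.sqrt_pos.mpr (hdpos (ℓ i))
    exact div_le_div₀ (hθ i).1.le (hθmin_le i) hsqrtdpos hdub'
  -- orthogonality of Qs preserves row sums of squares
  have hQQt : Qs * Qsᵀ = 1 := mul_eq_one_comm.mp hQs
  have hrowQ : ∀ v : Fin K → ℝ, ∑ k, (∑ j, v j * Qs j k) ^ 2 = ∑ j, v j ^ 2 := by
    intro v
    have hent : ∀ j j', (∑ k, Qs j k * Qs j' k) = if j = j' then 1 else 0 := by
      intro j j'
      have h1 := congrFun (congrFun hQQt j) j'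
      rw [Matrix.mul_apply] at h1
      simpa [Matrix.transpose_apply, Matrix.one_apply] using h1
    calc ∑ k, (∑ j, v j * Qs j k) ^ 2
        = ∑ k, ∑ j, ∑ j', (v j * v j') * (Qs j k * Qs j' k) := by
          refine Finset.sum_congr rfl fun k _ => ?_
          rw [sq, Finset.sum_mul_sum]
          exact Finset.sum_congr rfl fun j _ =>
            Finset.sum_congr rfl fun j' _ => by ring
      _ = ∑ j, ∑ j', (v j * v j') * ∑ k, Qs j k * Qs j' k := by
          rw [Finset.sum_comm]
          refine Finset.sum_congr rfl fun j _ => ?_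
          rw [Finset.sum_comm]
          exact Finset.sum_congr rfl fun j' _ => (Finset.mul_sum _ _ _).symm
      _ = ∑ j, v j ^ 2 := by
          refine Finset.sum_congr rfl fun j _ => ?_
          simp only [hent, mul_ite, mul_one, mul_zero]
          rw [Finset.sum_ite_eq Finset.univ j (fun j' => v j * v j')]
          simp [sq]
  -- per-row bound
  set Bnd : ℝ := 2 * Real.sqrt (2 * K) * specNorm (Shat - ∑ l, (OmegaL θ Z (B l)) ^ 2) /
        (c₂ * thetaMin θ ^ 4 * nMin Z ^ 2 * L) with hBnd
  set u : Fin n → Fin K → ℝ := fun i k => ∑ j, Vhat i j * Qs j k with hu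
  have hunorm : ∀ i, vecNorm (u i) = vecNorm (fun j => Vhat i j) := by
    intro i
    rw [vecNorm, vecNorm, hrowQ (fun j => Vhat i j)]
  have hrowbound : ∀ i,
      vecNorm (fun k => (rowNormalize Vhat * Qs - rowNormalize V) i k) ≤
        (2 / mlow) * vecNorm (fun k => ((Vhat * Qs - V)) i k) := by
    intro i
    have hVhatpos : 0 < vecNorm (fun j => Vhat i j) := vecNorm_pos (by
      intro h
      exact hVhatRows i (funext fun j => congrFun h j))
    have hupos : 0 < vecNorm (u i) := by rw [hunorm]; exact hVhatpos
    have hVipos : 0 < vecNorm (fun j => V i j) := lt_of_lt_of_le hmlowpos (hVrow_lb i)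
    set ue : EuclideanSpace ℝ (Fin K) := (WithLp.equiv 2 (Fin K → ℝ)).symm (u i) with hue
    set ve : EuclideanSpace ℝ (Fin K) := (WithLp.equiv 2 (Fin K → ℝ)).symm (fun j => V i j)
      with hve
    have hue0 : ue ≠ 0 := by
      intro h
      rw [vecNorm_eq_norm, ← hue, h, norm_zero] at hupos
      exact lt_irrefl _ hupos
    have hve0 : ve ≠ 0 := by
      intro h
      rw [vecNorm_eq_norm, ← hve, h, norm_zero] at hVipos
      exact lt_irrefl _ hVipos
    have hne : ‖ue‖ = vecNorm (u i) := (vecNorm_eq_norm (u i)).symm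
    have hnv : ‖ve‖ = vecNorm (fun j => V i j) := (vecNorm_eq_norm _).symm
    have hrow_eq : (fun k => (rowNormalize Vhat * Qs - rowNormalize V) i k)
        = (WithLp.equiv 2 (Fin K → ℝ)) (‖ue‖⁻¹ • ue - ‖ve‖⁻¹ • ve) := by
      funext k
      simp only [Matrix.sub_apply, Matrix.mul_apply, rowNormalize]
      have lhs1 : ∑ j, Vhat i j / vecNorm (fun j' => Vhat i j') * Qs j k
          = (vecNorm (u i))⁻¹ * u i k := by
        rw [hunorm, hu]
        simp only [div_eq_inv_mul]
        rw [Finset.mul_sum]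
        exact Finset.sum_congr rfl fun j _ => by ring
      rw [lhs1]
      have rhs1 : (WithLp.equiv 2 (Fin K → ℝ)) (‖ue‖⁻¹ • ue - ‖ve‖⁻¹ • ve) k
          = ‖ue‖⁻¹ * u i k - ‖ve‖⁻¹ * V i k := rfl
      rw [rhs1, hne, hnv, div_eq_inv_mul]
    have hdiff_eq : (fun k => (Vhat * Qs - V) i k)
        = (WithLp.equiv 2 (Fin K → ℝ)) (ue - ve) := by
      funext k
      simp only [Matrix.sub_apply, Matrix.mul_apply]
      rfl
    calc vecNorm (fun k => (rowNormalize Vhat * Qs - rowNormalize V) i k)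
        = ‖‖ue‖⁻¹ • ue - ‖ve‖⁻¹ • ve‖ := by
          rw [hrow_eq, vecNorm_eq_norm, Equiv.symm_apply_apply]
      _ ≤ 2 * ‖ue - ve‖ / ‖ve‖ := normalize_sub_le hue0 hve0
      _ ≤ (2 / mlow) * ‖ue - ve‖ := by
          have h1 : mlow ≤ ‖ve‖ := by rw [hnv]; exact hVrow_lb i
          have h2 : 2 * ‖ue - ve‖ / ‖ve‖ ≤ 2 * ‖ue - ve‖ / mlow := by
            gcongr
          calc 2 * ‖ue - ve‖ / ‖ve‖ ≤ 2 * ‖ue - ve‖ / mlow := h2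
            _ = (2 / mlow) * ‖ue - ve‖ := by ring
      _ = (2 / mlow) * vecNorm (fun k => (Vhat * Qs - V) i k) := by
          rw [hdiff_eq, vecNorm_eq_norm, Equiv.symm_apply_apply]
  -- Frobenius norms via row norms
  have hfrob_row : ∀ (A : Matrix (Fin n) (Fin K) ℝ),
      frobNorm A = Real.sqrt (∑ i, (vecNorm fun k => A i k) ^ 2) := by
    intro A
    rw [frobNorm]
    congr 1
    refine Finset.sum_congr rfl fun i _ => ?_
    rw [vecNorm, Real.sq_sqrt (Finset.sum_nonneg fun j _ => sq_nonneg _)]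
  have hfrob_le : frobNorm (rowNormalize Vhat * Qs - rowNormalize V) ≤
      (2 / mlow) * frobNorm (Vhat * Qs - V) := by
    rw [hfrob_row, hfrob_row]
    rw [show (2 / mlow) * Real.sqrt (∑ i, (vecNorm fun k => (Vhat * Qs - V) i k) ^ 2)
        = Real.sqrt ((2 / mlow) ^ 2 * ∑ i, (vecNorm fun k => (Vhat * Qs - V) i k) ^ 2) by
          rw [Real.sqrt_mul (sq_nonneg _), Real.sqrt_sq (by positivity)]]
    apply Real.sqrt_le_sqrt
    rw [Finset.mul_sum]
    refine Finset.sum_le_sum fun i _ => ?_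
    have h := hrowbound i
    have h0 := vecNorm_nonneg (fun k => (rowNormalize Vhat * Qs - rowNormalize V) i k)
    nlinarith [vecNorm_nonneg (fun k => (Vhat * Qs - V) i k), hmlowpos]
  have h2m : (0:ℝ) ≤ 2 / mlow := by positivity
  have hchain : frobNorm (rowNormalize Vhat * Qs - rowNormalize V) ≤ (2 / mlow) * Bnd :=
    le_trans hfrob_le (mul_le_mul_of_nonneg_left hQsbound h2m)
  refine le_trans hchain (le_of_eq ?_)
  rw [hBnd, hmlow]
  have hs : Real.sqrt (nMax Z) ≠ 0 := by positivity
  have hLne : (L:ℝ) ≠ 0 := Nat.cast_ne_zero.mpr hL.ne'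
  have hnMinne : nMin Z ≠ 0 := by linarith
  have hθminne : thetaMin θ ≠ 0 := hθminpos.ne'
  have hθmaxne : thetaMax θ ≠ 0 := hθmaxpos.ne'
  field_simp
  ring

end
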